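/- Fix positive real numbers k, λ and t^P, and for u > 0 set v = k·u, h = 1/u + 1/v, g = 1/λ + u/(v(u+v+λ)) − h, and q = 1/(uv) − (v+λ)/(v(u+v+λ)²). Define R(u) = ( h²e^{2u t^P} + (h(g − t^P) − 1/(uv))e^{u t^P} + g/λ + q )/( h e^{u t^P} + g ). Then R(u) tends to +∞ as u tends to +∞. -/

import Mathlib

open Real Filter Set

noncomputable def rBarU (k lam tP u : ℝ) : ℝ :=
  let v := k * u
  let h := 1 / u + 1 / v
  let g := 1 / lam + u / (v * (u + v + lam)) - h
  let q := 1 / (u * v) - (v + lam) / (v * (u + v + lam) ^ 2)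
  (h ^ 2 * Real.exp (2 * u * tP) + (h * (g - tP) - 1 / (u * v)) * Real.exp (u * tP)
      + g / lam + q) / (h * Real.exp (u * tP) + g)

theorem statement12 (k lam tP : ℝ) (hk : 0 < k) (hlam : 0 < lam) (htP : 0 < tP) :
    Tendsto (rBarU k lam tP) atTop atTop := by
  have htend : Tendsto (fun u : ℝ => Real.exp (u * tP) / u - (tP + 1)) atTop atTop := by
    have h1 : Tendsto (fun x : ℝ => Real.exp x / x) atTop atTop := by
      simpa using Real.tendsto_exp_div_pow_atTop 1
    have h2 : Tendsto (fun u : ℝ => tP * u) atTop atTop :=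
      Tendsto.const_mul_atTop htP tendsto_id
    have h3 : Tendsto (fun u : ℝ => tP * (Real.exp (tP * u) / (tP * u))) atTop atTop :=
      Tendsto.const_mul_atTop htP (h1.comp h2)
    have h4 : Tendsto (fun u : ℝ => Real.exp (u * tP) / u) atTop atTop := by
      apply h3.congr'
      filter_upwards [eventually_gt_atTop 0] with u hu
      rw [mul_comm u tP]
      field_simp
    exact tendsto_atTop_add_const_right _ _ h4
  apply tendsto_atTop_mono' atTop _ htend
  filter_upwards [eventually_ge_atTop (1 : ℝ), eventually_ge_atTop (lam * (k + 1) / k)]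
    with u hu1 hu2
  have hu : 0 < u := lt_of_lt_of_le one_pos hu1
  set v : ℝ := k * u with hvdef
  have hv : 0 < v := mul_pos hk hu
  set h : ℝ := 1 / u + 1 / v with hhdef
  set g : ℝ := 1 / lam + u / (v * (u + v + lam)) - h with hgdef
  set q : ℝ := 1 / (u * v) - (v + lam) / (v * (u + v + lam) ^ 2) with hqdef
  set E : ℝ := Real.exp (u * tP) with hEdef
  have hE : 0 < E := Real.exp_pos _
  have hh : 0 < h := by positivity
  have huvlam : 0 < u + v + lam := by positivity
  -- g ≥ 0
  have hhle : h ≤ 1 / lam := by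
    have h1 : h = (k + 1) / (k * u) := by
      rw [hhdef, hvdef]; field_simp
    rw [h1, div_le_div_iff₀ (by positivity) hlam]
    have : lam * (k + 1) ≤ u * k := by
      rw [div_le_iff₀ hk] at hu2; linarith
    linarith
  have hg : 0 ≤ g := by
    have h2 : 0 ≤ u / (v * (u + v + lam)) := by positivity
    rw [hgdef]; linarith
  -- q ≥ 0
  have hq : 0 ≤ q := by
    rw [hqdef, sub_nonneg, div_le_div_iff₀ (by positivity) (by positivity)]
    nlinarith [sq_nonneg (u - (v + lam)), mul_pos hu (by positivity : (0:ℝ) < v + lam)]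
  have hD : 0 < h * E + g := by positivity
  have hN : rBarU k lam tP u =
      (h ^ 2 * E ^ 2 + (h * (g - tP) - 1 / (u * v)) * E + g / lam + q) / (h * E + g) := by
    show (h ^ 2 * Real.exp (2 * u * tP) + (h * (g - tP) - 1 / (u * v)) * Real.exp (u * tP)
      + g / lam + q) / (h * Real.exp (u * tP) + g) = _
    rw [hEdef, show (2:ℝ) * u * tP = u * tP + u * tP by ring, Real.exp_add, ← sq]
  rw [hN, le_div_iff₀ hD]
  have huv1 : 0 ≤ u + v - 1 := by linarith [hv.le]
  have key : h ^ 2 * E ^ 2 + (h * (g - tP) - 1 / (u * v)) * E + g / lam + q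
      - (E / u - (tP + 1)) * (h * E + g)
      = (h / v) * E ^ 2 + (g / v + (u + v - 1) / (u * v)) * E + g / lam + q + (tP + 1) * g := by
    rw [hhdef]
    field_simp
    ring
  have t1 : 0 ≤ h / v * E ^ 2 := by positivity
  have t2 : 0 ≤ (g / v + (u + v - 1) / (u * v)) * E :=
    mul_nonneg (add_nonneg (div_nonneg hg hv.le) (div_nonneg huv1 (by positivity))) hE.le
  have t3 : 0 ≤ g / lam := div_nonneg hg hlam.le
  have t4 : 0 ≤ (tP + 1) * g := mul_nonneg (by linarith) hg
  clear_value v h g q E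
  linarith [key]
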